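/- For any boolean function f : F_2^n → {-1,1}, the weak linearity identity holds: E_{x,y} Σ_{α,β} f̂_x^2(α) f̂_y^2(β) f̂_{x+y}^2(α+β) = E_y Σ_α f̂_y^6(α). -/

import Mathlib

open Finset

/-- The character `(-1)^{⟨α,x⟩}` on `F_2^n`. -/
noncomputable def chi {n : ℕ} (α x : Fin n → ZMod 2) : ℝ :=
  (-1 : ℝ) ^ ((∑ i, α i * x i : ZMod 2)).val

/-- Fourier coefficient `f̂(α) = E_x f(x)(-1)^{⟨α,x⟩}`. -/
noncomputable def fCoeff {n : ℕ} (f : (Fin n → ZMod 2) → ℝ) (α : Fin n → ZMod 2) : ℝ :=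
  (∑ x, f x * chi α x) / 2 ^ n

/-- Discrete derivative `f_y(x) = f(x) f(x+y)`. -/
noncomputable def dderiv {n : ℕ} (f : (Fin n → ZMod 2) → ℝ) (y : Fin n → ZMod 2) :
    (Fin n → ZMod 2) → ℝ := fun x => f x * f (x + y)

/-- `‖f‖_{U_d}^{2^d} = E_{x,y_1,…,y_d} ∏_{S ⊆ [d]} f(x + Σ_{i∈S} y_i)`. -/
noncomputable def gowersPow {n : ℕ} (d : ℕ) (f : (Fin n → ZMod 2) → ℝ) : ℝ :=
  (∑ x : Fin n → ZMod 2, ∑ y : Fin d → Fin n → ZMod 2,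
      ∏ S : Finset (Fin d), f (x + ∑ i ∈ S, y i)) / ((2 : ℝ) ^ n) ^ (d + 1)

/-- The Gowers uniformity norm `‖f‖_{U_d}`. -/
noncomputable def gowersNorm {n : ℕ} (d : ℕ) (f : (Fin n → ZMod 2) → ℝ) : ℝ :=
  gowersPow d f ^ ((1 : ℝ) / 2 ^ d)

namespace WL
variable {n : ℕ}
local notation "G" => Fin n → ZMod 2

lemma addself (v : G) : v + v = 0 := by
  funext i; exact CharTwo.add_self_eq_zero _

lemma add_eq_zero_iff (a b : G) : a + b = 0 ↔ a = b := by
  constructor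
  · intro h; funext i
    have h' : a i + b i = 0 := congrFun h i
    revert h'
    have : ∀ x y : ZMod 2, x + y = 0 → x = y := by decide
    exact this _ _
  · rintro rfl; exact addself _

lemma neg_one_pow_val_add (a b : ZMod 2) :
    (-1:ℝ) ^ (a + b).val = (-1:ℝ)^a.val * (-1:ℝ)^b.val := by
  obtain rfl | rfl : a = 0 ∨ a = 1 := by revert a; decide
  all_goals obtain rfl | rfl : b = 0 ∨ b = 1 := by revert b; decide
  all_goals
    norm_num [show ((2:ZMod 2)).val = 0 from rfl, show ((1:ZMod 2)).val = 1 from rfl,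
      show ((0:ZMod 2)).val = 0 from rfl]

lemma chi_add_right (α x y : G) : chi α (x + y) = chi α x * chi α y := by
  unfold chi
  rw [show (∑ i, α i * (x+y) i) = (∑ i, α i * x i) + (∑ i, α i * y i) by
    simp [mul_add, Finset.sum_add_distrib]]
  exact neg_one_pow_val_add _ _

lemma chi_comm (α x : G) : chi α x = chi x α := by
  unfold chi
  rw [show (∑ i, α i * x i) = ∑ i, x i * α i from Finset.sum_congr rfl fun i _ => mul_comm _ _]

lemma chi_add_left (α β x : G) : chi (α + β) x = chi α x * chi β x := by
  rw [chi_comm, chi_add_right, chi_comm x α, chi_comm x β]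

lemma sum_chi (v : G) : ∑ α : G, chi α v = if v = 0 then (2:ℝ)^n else 0 := by
  by_cases hv : v = 0
  · subst hv
    simp [chi]
  · simp only [hv, if_false]
    obtain ⟨i, hi⟩ : ∃ i, v i ≠ 0 := by
      by_contra h; push_neg at h; exact hv (funext fun i => h i)
    have hvi : v i = 1 := by
      have : ∀ x : ZMod 2, x ≠ 0 → x = 1 := by decide
      exact this _ hi
    set e : G := Pi.single i 1 with he
    have hce : chi e v = -1 := by
      unfold chi
      rw [show (∑ j, e j * v j) = v i by
        rw [he]; simp [Pi.single_apply, Finset.sum_ite_eq', hvi]]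
      rw [hvi, show ((1:ZMod 2)).val = 1 from rfl]; norm_num
    have hre : ∑ α : G, chi α v = ∑ α : G, chi (α + e) v :=
      (Fintype.sum_equiv (Equiv.addRight e) _ _ (fun a => rfl)).symm
    have : ∑ α : G, chi α v = -∑ α : G, chi α v := by
      nth_rewrite 1 [hre]
      rw [← Finset.sum_neg_distrib]
      exact Finset.sum_congr rfl fun a _ => by
        rw [chi_add_left, hce]; ring
    linarith

lemma sq_eq (g : G → ℝ) (γ : G) :
    (∑ z, g z * chi γ z)^2 = ∑ t, (∑ z, g z * g (z + t)) * chi γ t := by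
  rw [sq, Finset.sum_mul_sum]
  rw [show (∑ t, (∑ z, g z * g (z + t)) * chi γ t) = ∑ z, ∑ t, g z * g (z + t) * chi γ t from by
    simp only [Finset.sum_mul]; rw [Finset.sum_comm]]
  refine Finset.sum_congr rfl fun z _ => ?_
  refine Fintype.sum_equiv (Equiv.addLeft z) _ _ fun w => ?_
  simp only [Equiv.coe_addLeft]
  rw [chi_add_right, show z + (z + w) = w by rw [← add_assoc, addself, zero_add]]
  ring

lemma L1 (g : G → ℝ) (t : G) :
    ∑ α : G, (∑ z, g z * chi α z)^2 * chi α t = (2:ℝ)^n * ∑ z, g z * g (z + t) := by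
  have h1 : ∀ α : G, (∑ z, g z * chi α z)^2 * chi α t
      = ∑ s, (∑ z, g z * g (z + s)) * chi α s * chi α t := by
    intro α; rw [sq_eq, Finset.sum_mul]
  simp only [h1]
  rw [Finset.sum_comm]
  have h2 : ∀ s : G, ∑ α : G, (∑ z, g z * g (z + s)) * chi α s * chi α t
      = (∑ z, g z * g (z + s)) * (if s + t = 0 then (2:ℝ)^n else 0) := fun s => by
    simp only [mul_assoc]
    simp only [← chi_add_right]
    rw [← Finset.mul_sum, sum_chi]
  simp only [h2, add_eq_zero_iff]
  simp [mul_ite, Finset.sum_ite_eq']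
  ring

lemma parseval (b c : G → ℝ) :
    ∑ s : G, (∑ t, b t * chi s t) * (∑ x, c x * chi s x) = (2:ℝ)^n * ∑ t, b t * c t := by
  have h : ∀ s : G, (∑ t, b t * chi s t) * (∑ x, c x * chi s x)
      = ∑ t, ∑ x, b t * c x * chi s (t + x) := by
    intro s
    rw [Finset.sum_mul_sum]
    exact Finset.sum_congr rfl fun t _ => Finset.sum_congr rfl fun x _ => by
      rw [chi_add_right]; ring
  simp only [h]
  rw [Finset.sum_comm]
  rw [Finset.mul_sum]
  refine Finset.sum_congr rfl fun t _ => ?_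
  rw [Finset.sum_comm]
  have h2 : ∀ x : G, ∑ s : G, b t * c x * chi s (t + x)
      = b t * c x * (if t + x = 0 then (2:ℝ)^n else 0) := fun x => by
    rw [← Finset.mul_sum, sum_chi]
  simp only [h2, add_eq_zero_iff]
  simp [mul_ite, Finset.sum_ite_eq]
  ring

lemma L3 (a : G → ℝ) :
    ∑ s : G, (∑ x, a x * chi s x)^3 = (2:ℝ)^n * ∑ x : G, ∑ y : G, a x * a y * a (x + y) := by
  have h : ∀ s : G, (∑ x, a x * chi s x)^3
      = (∑ t, (∑ x, a x * a (x + t)) * chi s t) * (∑ x, a x * chi s x) := by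
    intro s; rw [← sq_eq]; ring
  simp only [h, parseval]
  rw [Finset.sum_comm]
  congr 1
  refine Finset.sum_congr rfl fun x _ => ?_
  rw [Finset.sum_mul]
  exact Finset.sum_congr rfl fun y _ => by rw [show y + x = x + y from add_comm y x]; ring

lemma L2 (f : G → ℝ) (t s : G) :
    ∑ x : G, (∑ z, dderiv f x z * dderiv f x (z + t)) * chi s x
      = (∑ z, dderiv f t z * chi s z)^2 := by
  rw [sq, Finset.sum_mul_sum]
  simp only [Finset.sum_mul, dderiv]
  rw [Finset.sum_comm]
  refine Finset.sum_congr rfl fun z _ => ?_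
  refine (Fintype.sum_equiv (Equiv.addLeft z) _ _ fun w => ?_).symm
  simp only [Equiv.coe_addLeft]
  rw [chi_add_right, show z + (z + w) = w by rw [← add_assoc, addself, zero_add],
    show z + t + (z + w) = w + t by rw [show z + t + (z + w) = (z + z) + (w + t) by ring,
      addself, zero_add]]
  ring

lemma sum_mul_sum_mul (a b : G → ℝ) (C : ℝ) :
    ∑ α : G, ∑ β : G, a α * b β * C = (∑ α : G, a α) * (∑ β : G, b β) * C := by
  rw [Finset.sum_mul_sum]
  simp only [Finset.sum_mul]

lemma swap3 (F : G → G → G → ℝ) :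
    ∑ x : G, ∑ y : G, ∑ t : G, F x y t = ∑ t : G, ∑ x : G, ∑ y : G, F x y t := by
  have h : ∀ x : G, ∑ y : G, ∑ t : G, F x y t = ∑ t : G, ∑ y : G, F x y t :=
    fun x => by rw [Finset.sum_comm]
  simp only [h]
  rw [Finset.sum_comm]

lemma key (f : G → ℝ) :
    ∑ x : G, ∑ y : G, ∑ α : G, ∑ β : G,
      (∑ z, dderiv f x z * chi α z)^2 * (∑ z, dderiv f y z * chi β z)^2 *
        (∑ z, dderiv f (x+y) z * chi (α+β) z)^2
      = (2:ℝ)^n * ∑ t : G, ∑ s : G, (∑ z, dderiv f t z * chi s z)^6 := by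
  have hA : ∀ x y : G, (∑ α : G, ∑ β : G,
      (∑ z, dderiv f x z * chi α z)^2 * (∑ z, dderiv f y z * chi β z)^2 *
        (∑ z, dderiv f (x+y) z * chi (α+β) z)^2)
      = (2:ℝ)^n * (2:ℝ)^n * ∑ t : G,
          (∑ z, dderiv f x z * dderiv f x (z + t)) *
          (∑ z, dderiv f y z * dderiv f y (z + t)) *
          (∑ z, dderiv f (x+y) z * dderiv f (x+y) (z + t)) := by
    intro x y
    have e1 : ∀ α β : G,
        (∑ z, dderiv f x z * chi α z)^2 * (∑ z, dderiv f y z * chi β z)^2 *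
          (∑ z, dderiv f (x+y) z * chi (α+β) z)^2
        = ∑ t : G, ((∑ z, dderiv f x z * chi α z)^2 * chi α t) *
            ((∑ z, dderiv f y z * chi β z)^2 * chi β t) *
            (∑ z, dderiv f (x+y) z * dderiv f (x+y) (z + t)) := by
      intro α β
      rw [sq_eq (dderiv f (x+y)) (α+β), Finset.mul_sum]
      exact Finset.sum_congr rfl fun t _ => by rw [chi_add_left]; ring
    simp only [e1]
    rw [swap3, Finset.mul_sum]
    refine Finset.sum_congr rfl fun t _ => ?_
    rw [sum_mul_sum_mul, L1 (dderiv f x) t, L1 (dderiv f y) t]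
    ring
  simp only [hA]
  rw [show (∑ x : G, ∑ y : G, (2:ℝ)^n * (2:ℝ)^n * ∑ t : G,
          (∑ z, dderiv f x z * dderiv f x (z + t)) *
          (∑ z, dderiv f y z * dderiv f y (z + t)) *
          (∑ z, dderiv f (x+y) z * dderiv f (x+y) (z + t)))
      = ∑ x : G, ∑ y : G, ∑ t : G, (2:ℝ)^n * (2:ℝ)^n *
          ((∑ z, dderiv f x z * dderiv f x (z + t)) *
          (∑ z, dderiv f y z * dderiv f y (z + t)) *
          (∑ z, dderiv f (x+y) z * dderiv f (x+y) (z + t))) from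
    Finset.sum_congr rfl fun x _ => Finset.sum_congr rfl fun y _ => Finset.mul_sum _ _ _]
  rw [swap3, Finset.mul_sum]
  refine Finset.sum_congr rfl fun t _ => ?_
  have h3 := L3 (fun x => ∑ z, dderiv f x z * dderiv f x (z + t))
  have h2 : ∀ s : G, (∑ x : G, (∑ z, dderiv f x z * dderiv f x (z + t)) * chi s x)^3
      = ((∑ z, dderiv f t z * chi s z)^2)^3 := fun s => by rw [L2]
  simp only [h2] at h3
  have hpow : ∀ s : G, (((∑ z, dderiv f t z * chi s z)^2)^3 : ℝ)
      = (∑ z, dderiv f t z * chi s z)^6 := fun s => by ring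
  simp only [hpow] at h3
  rw [show ∑ x : G, ∑ y : G, (2:ℝ)^n * (2:ℝ)^n *
          ((∑ z, dderiv f x z * dderiv f x (z + t)) *
          (∑ z, dderiv f y z * dderiv f y (z + t)) *
          (∑ z, dderiv f (x+y) z * dderiv f (x+y) (z + t)))
      = (2:ℝ)^n * (2:ℝ)^n * ∑ x : G, ∑ y : G,
          ((∑ z, dderiv f x z * dderiv f x (z + t)) *
          (∑ z, dderiv f y z * dderiv f y (z + t)) *
          (∑ z, dderiv f (x+y) z * dderiv f (x+y) (z + t))) from by
    rw [Finset.mul_sum]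
    exact Finset.sum_congr rfl fun x _ => by rw [Finset.mul_sum]]
  rw [mul_assoc, ← h3]

end WL

/-- Weak linearity identity:
`E_{x,y} Σ_{α,β} f̂_x²(α) f̂_y²(β) f̂_{x+y}²(α+β) = E_y Σ_α f̂_y⁶(α)`. -/
theorem weak_linearity_identity {n : ℕ} (f : (Fin n → ZMod 2) → ℝ)
    (hf : ∀ x, f x = 1 ∨ f x = -1) :
    (∑ x : Fin n → ZMod 2, ∑ y : Fin n → ZMod 2, ∑ α : Fin n → ZMod 2, ∑ β : Fin n → ZMod 2,
        fCoeff (dderiv f x) α ^ 2 * fCoeff (dderiv f y) β ^ 2 *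
          fCoeff (dderiv f (x + y)) (α + β) ^ 2) / ((2 : ℝ) ^ n) ^ 2 =
      (∑ y : Fin n → ZMod 2, ∑ α : Fin n → ZMod 2, fCoeff (dderiv f y) α ^ 6) / 2 ^ n := by
  have h2n : ((2:ℝ)^n) ≠ 0 := by positivity
  have h1 : ∀ x y α β : Fin n → ZMod 2,
      fCoeff (dderiv f x) α ^ 2 * fCoeff (dderiv f y) β ^ 2 *
        fCoeff (dderiv f (x + y)) (α + β) ^ 2
      = (∑ z, dderiv f x z * chi α z)^2 * (∑ z, dderiv f y z * chi β z)^2 *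
        (∑ z, dderiv f (x+y) z * chi (α+β) z)^2 / ((2:ℝ)^n)^6 := by
    intro x y α β; unfold fCoeff
    ring
  have h2 : ∀ y α : Fin n → ZMod 2,
      fCoeff (dderiv f y) α ^ 6 = (∑ z, dderiv f y z * chi α z)^6 / ((2:ℝ)^n)^6 := by
    intro y α; unfold fCoeff
    ring
  simp only [h1, h2, ← Finset.sum_div]
  rw [WL.key f]
  field_simp
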